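/- Let G be an unmixed graph as in the setup. If for all r ≥ 2 and all r-subsets {i_1,...,i_r} ⊆ {1,...,n} the cycle C_{i_1...i_r} is not contained in G, then {x_1y_1, ..., x_ny_n} is the unique perfect matching of G. -/

import Mathlib

open SimpleGraph

/-- `C` is a vertex cover of `G`. -/
def IsVC {V : Type*} (G : SimpleGraph V) (C : Set V) : Prop :=
  ∀ ⦃u v : V⦄, G.Adj u v → u ∈ C ∨ v ∈ C

/-- `C` is a minimal (inclusion-wise) vertex cover of `G`. -/
def IsMinVC {V : Type*} (G : SimpleGraph V) (C : Set V) : Prop :=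
  IsVC G C ∧ ∀ C' : Set V, C' ⊆ C → IsVC G C' → C' = C

/-- `A` is an independent set of `G`. -/
def IsIndep {V : Type*} (G : SimpleGraph V) (A : Set V) : Prop :=
  ∀ ⦃u v : V⦄, u ∈ A → v ∈ A → ¬ G.Adj u v

/-- `A` is a maximal independent set of `G`. -/
def IsMaxIndep {V : Type*} (G : SimpleGraph V) (A : Set V) : Prop :=
  IsIndep G A ∧ ∀ A' : Set V, A ⊆ A' → IsIndep G A' → A' = A

/-- `G` is unmixed: all minimal vertex covers have the same cardinality. -/
def Unmixed {V : Type*} (G : SimpleGraph V) : Prop :=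
  ∀ C₁ C₂ : Set V, IsMinVC G C₁ → IsMinVC G C₂ → C₁.ncard = C₂.ncard

/-- Vertex type with the two classes `X = {x_1,…,x_n}` (left) and `Y = {y_1,…,y_n}` (right). -/
abbrev VT (n : ℕ) := Fin n ⊕ Fin n

/-- The vertex `x_i`. -/
def xv {n : ℕ} (i : Fin n) : VT n := Sum.inl i

/-- The vertex `y_i`. -/
def yv {n : ℕ} (i : Fin n) : VT n := Sum.inr i

/-- The 4-cycle `C_{ij}` (edges `x_iy_i, y_ix_j, x_jy_j, y_jx_i`) is contained in `G`. -/
def HasC2 {n : ℕ} (G : SimpleGraph (VT n)) (i j : Fin n) : Prop :=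
  G.Adj (xv i) (yv i) ∧ G.Adj (yv i) (xv j) ∧ G.Adj (xv j) (yv j) ∧ G.Adj (yv j) (xv i)

/-- The `2r`-cycle `C_{i_1…i_r}` given by `f : Fin r → Fin n` is contained in `G`:
edges `x_{f s} y_{f s}` and `y_{f s} x_{f (s+1)}` (cyclically). -/
def IsCycleIn {n r : ℕ} (G : SimpleGraph (VT n)) (f : Fin r → Fin n) : Prop :=
  ∀ s : Fin r, G.Adj (xv (f s)) (yv (f s)) ∧ G.Adj (yv (f s)) (xv (f (finRotate r s)))

/-- `M` is the standard matching `{x_1y_1, …, x_ny_n}`. -/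
def StdPM {n : ℕ} (G : SimpleGraph (VT n)) (M : G.Subgraph) : Prop :=
  ∀ u v : VT n, M.Adj u v ↔ ∃ i : Fin n, (u = xv i ∧ v = yv i) ∨ (u = yv i ∧ v = xv i)

lemma finRotate_val_aux {r : ℕ} (s : Fin r) : ((finRotate r) s).val = (s.val + 1) % r := by
  rcases r with _ | r'
  · exact s.elim0
  · rw [finRotate_succ_apply, Fin.add_def]
    show ((s : ℕ) + (1 : Fin (r' + 1)).val) % (r' + 1) = _
    rw [Fin.val_one', Nat.add_mod_mod]

/-- If no cycle `C_{i_1…i_r}` (`r ≥ 2`) is contained in the unmixed graph `G` (setup (*)),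
then `{x_1y_1, …, x_ny_n}` is the unique perfect matching of `G`. -/
theorem no_cycle_unique_matching {n : ℕ} (G : SimpleGraph (VT n))
    (hni : ∀ v : VT n, ∃ u : VT n, G.Adj u v)
    (hX : IsMinVC G (Set.range (xv : Fin n → VT n)))
    (hY : IsMaxIndep G (Set.range (yv : Fin n → VT n)))
    (hm : ∀ i : Fin n, G.Adj (xv i) (yv i))
    (hht : ∀ C : Set (VT n), IsVC G C → n ≤ C.ncard)
    (hu : Unmixed G)
    (hnc : ∀ r : ℕ, 2 ≤ r → ∀ f : Fin r → Fin n, Function.Injective f → ¬ IsCycleIn G f) :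
    (∃ M : G.Subgraph, M.IsPerfectMatching ∧ StdPM G M) ∧
      ∀ M : G.Subgraph, M.IsPerfectMatching → StdPM G M := by
  classical
  have hYind := hY.1
  have hstd : ∃ M : G.Subgraph, M.IsPerfectMatching ∧ StdPM G M := by
    refine ⟨⟨Set.univ,
      fun u v => ∃ i : Fin n, (u = xv i ∧ v = yv i) ∨ (u = yv i ∧ v = xv i),
      ?_, fun _ => Set.mem_univ _, ?_⟩, ?_, fun u v => Iff.rfl⟩
    · rintro u v ⟨i, ⟨rfl, rfl⟩ | ⟨rfl, rfl⟩⟩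
      · exact hm i
      · exact (hm i).symm
    · constructor
      rintro u v ⟨i, ⟨rfl, rfl⟩ | ⟨rfl, rfl⟩⟩
      · exact ⟨i, Or.inr ⟨rfl, rfl⟩⟩
      · exact ⟨i, Or.inl ⟨rfl, rfl⟩⟩
    · rw [SimpleGraph.Subgraph.isPerfectMatching_iff]
      intro v
      cases v with
      | inl j =>
        refine ⟨yv j, ⟨j, Or.inl ⟨rfl, rfl⟩⟩, ?_⟩
        rintro w ⟨i, ⟨h1, rfl⟩ | ⟨h1, rfl⟩⟩
        · obtain rfl : j = i := Sum.inl.inj h1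
          rfl
        · exact absurd h1 (by simp [xv, yv])
      | inr j =>
        refine ⟨xv j, ⟨j, Or.inr ⟨rfl, rfl⟩⟩, ?_⟩
        rintro w ⟨i, ⟨h1, rfl⟩ | ⟨h1, rfl⟩⟩
        · exact absurd h1 (by simp [xv, yv])
        · obtain rfl : j = i := Sum.inr.inj h1
          rfl
  refine ⟨hstd, ?_⟩
  intro M hM
  have hPM := (SimpleGraph.Subgraph.isPerfectMatching_iff).1 hM
  -- each y_i is matched to some x_{g i}
  have hgex : ∀ i : Fin n, ∃ j, M.Adj (yv i) (xv j) := by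
    intro i
    obtain ⟨w, hw, -⟩ := hPM (yv i)
    cases w with
    | inl j => exact ⟨j, hw⟩
    | inr j => exact absurd (M.adj_sub hw) (hYind ⟨i, rfl⟩ ⟨j, rfl⟩)
  choose g hg using hgex
  have hginj : Function.Injective g := by
    intro i i' h
    obtain ⟨w, -, hu⟩ := hPM (xv (g i))
    have h1 : M.Adj (xv (g i)) (yv i) := (hg i).symm
    have h2 : M.Adj (xv (g i)) (yv i') := by rw [h]; exact (hg i').symm
    have h3 : yv i = yv i' := (hu (yv i) h1).trans (hu (yv i') h2).symm
    exact Sum.inr.inj h3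
  have hgbij : Function.Bijective g := Finite.injective_iff_bijective.mp hginj
  set e : Equiv.Perm (Fin n) := Equiv.ofBijective g hgbij with he
  have hge : ∀ i, g i = e i := fun i => rfl
  -- g is the identity
  have hfix : ∀ i, g i = i := by
    by_contra hne
    push_neg at hne
    obtain ⟨i₀, hi₀⟩ := hne
    have hper : i₀ ∈ Function.periodicPts g := by
      refine ⟨orderOf e, orderOf_pos e, ?_⟩
      have hce : ⇑e = g := rfl
      show g^[orderOf e] i₀ = i₀
      rw [← hce, ← Equiv.Perm.coe_pow, pow_orderOf_eq_one]
      rfl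
    set r := Function.minimalPeriod g i₀ with hrdef
    have hr0 : 0 < r := Function.minimalPeriod_pos_of_mem_periodicPts hper
    have hr1 : r ≠ 1 := by
      intro h
      have := Function.isPeriodicPt_minimalPeriod g i₀
      rw [← hrdef, h] at this
      exact hi₀ this
    have hr2 : 2 ≤ r := by omega
    set f : Fin r → Fin n := fun s => g^[s.val] i₀ with hf
    have finj : Function.Injective f := by
      intro s t h
      exact Fin.ext (Function.iterate_injOn_Iio_minimalPeriod s.isLt t.isLt h)
    refine hnc r hr2 f finj ?_
    intro s
    refine ⟨hm (f s), ?_⟩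
    have hrs : (finRotate r s).val = (s.val + 1) % r := finRotate_val_aux s
    have hstep : f (finRotate r s) = g (f s) := by
      show g^[(finRotate r s).val] i₀ = g (g^[s.val] i₀)
      rw [hrs, ← Function.iterate_succ_apply' g s.val i₀]
      exact Function.iterate_mod_minimalPeriod_eq
    rw [hstep]
    exact M.adj_sub (hg (f s))
  have hg' : ∀ i : Fin n, M.Adj (yv i) (xv i) := fun i => by
    have h := hg i; rwa [hfix i] at h
  intro u v
  constructor
  · intro h
    cases u with
    | inl j =>
      obtain ⟨w, -, hu⟩ := hPM (xv j)
      have hv : v = yv j := (hu _ h).trans (hu _ (hg' j).symm).symm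
      exact ⟨j, Or.inl ⟨rfl, hv⟩⟩
    | inr j =>
      obtain ⟨w, -, hu⟩ := hPM (yv j)
      have hv : v = xv j := (hu _ h).trans (hu _ (hg' j)).symm
      exact ⟨j, Or.inr ⟨rfl, hv⟩⟩
  · rintro ⟨i, ⟨rfl, rfl⟩ | ⟨rfl, rfl⟩⟩
    · exact (hg' i).symm
    · exact hg' i
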